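/- Let (E,F) be a test pair, S an admissible pair of scales, and T ∈ L(E,E) with T|_F ∈ L(F,F). If (Φ_ε)_ε ∈ TO(E,F,S) is a test object, then (T∘Φ_ε − Φ_ε∘T)_ε is a 0-test object in TO⁰(E,F,S); the same holds if (Φ_ε)_ε ∈ TO⁰(E,F,S). -/

import Mathlib

open Filter Set

noncomputable section

def eps0 : Filter ℝ := nhdsWithin 0 (Set.Ioc 0 1)

def GrowthScale (A : Set (ℝ → ℝ)) : Prop :=
  (∀ lam ∈ A, ∀ ε ∈ Set.Ioc (0:ℝ) 1, 0 ≤ lam ε) ∧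
  (∀ lam ∈ A, ∀ mu ∈ A, ∃ nu ∈ A, (fun ε => lam ε + mu ε) =O[eps0] nu) ∧
  (∀ lam ∈ A, ∀ mu ∈ A, ∃ nu ∈ A, (fun ε => lam ε * mu ε) =O[eps0] nu) ∧
  (∃ lam ∈ A, 0 < Filter.liminf lam eps0)

def DecayScale (I : Set (ℝ → ℝ)) : Prop :=
  (∀ lam ∈ I, ∀ ε ∈ Set.Ioc (0:ℝ) 1, 0 ≤ lam ε) ∧
  (∀ lam ∈ I, ∃ mu ∈ I, ∃ nu ∈ I, (fun ε => mu ε + nu ε) =O[eps0] lam) ∧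
  (∀ lam ∈ I, ∃ mu ∈ I, ∃ nu ∈ I, (fun ε => mu ε * nu ε) =O[eps0] lam) ∧
  (∃ lam ∈ I, Filter.Tendsto lam eps0 (nhds 0))

def AdmissiblePair (A I : Set (ℝ → ℝ)) : Prop :=
  GrowthScale A ∧ DecayScale I ∧
  (∀ lam ∈ I, ∀ mu ∈ A, ∃ nu ∈ I, (fun ε => mu ε * nu ε) =O[eps0] lam) ∧
  (∃ lam ∈ A, ∃ mu ∈ I, mu =O[eps0] lam)

variable {E F : Type*}
  [AddCommGroup E] [Module ℝ E] [TopologicalSpace E] [IsTopologicalAddGroup E]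
  [ContinuousConstSMul ℝ E]
  [AddCommGroup F] [Module ℝ F] [TopologicalSpace F] [IsTopologicalAddGroup F]
  [ContinuousConstSMul ℝ F]

/-- The weak (simple convergence) topology on `L(E,F)`. -/
def simpleTop (E F : Type*) [AddCommGroup E] [Module ℝ E] [TopologicalSpace E]
    [AddCommGroup F] [Module ℝ F] [TopologicalSpace F] :
    TopologicalSpace (E →L[ℝ] F) :=
  TopologicalSpace.induced (fun Φ : E →L[ℝ] F => (Φ : E → F)) Pi.topologicalSpace

/-- Test objects `TO(E,F,S)` for a test pair given by `j : F →L E` and scales `(A,I)`. -/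
def IsTestObject (A I : Set (ℝ → ℝ)) (j : F →L[ℝ] E) (Φ : ℝ → (E →L[ℝ] F)) : Prop :=
  (∀ p : Seminorm ℝ (E →L[ℝ] F), @Continuous _ _ (simpleTop E F) _ p →
    ∃ lam ∈ A, (fun ε => p (Φ ε)) =O[eps0] lam) ∧
  (∀ p : Seminorm ℝ (F →L[ℝ] F), @Continuous _ _ (simpleTop F F) _ p →
    ∀ lam ∈ I, (fun ε => p ((Φ ε).comp j - ContinuousLinearMap.id ℝ F)) =O[eps0] lam) ∧
  Filter.Tendsto (fun ε => j.comp (Φ ε)) eps0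
    (@nhds _ (simpleTop E E) (ContinuousLinearMap.id ℝ E))

/-- 0-test objects `TO⁰(E,F,S)`. -/
def IsZeroTestObject (A I : Set (ℝ → ℝ)) (j : F →L[ℝ] E) (Φ : ℝ → (E →L[ℝ] F)) : Prop :=
  (∀ p : Seminorm ℝ (E →L[ℝ] F), @Continuous _ _ (simpleTop E F) _ p →
    ∃ lam ∈ A, (fun ε => p (Φ ε)) =O[eps0] lam) ∧
  (∀ p : Seminorm ℝ (F →L[ℝ] F), @Continuous _ _ (simpleTop F F) _ p →
    ∀ lam ∈ I, (fun ε => p ((Φ ε).comp j)) =O[eps0] lam) ∧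
  Filter.Tendsto (fun ε => j.comp (Φ ε)) eps0 (@nhds _ (simpleTop E E) 0)


/-- The commutator map `S ↦ T₁∘S − S∘T₂` as a linear map. -/
def commL {E F : Type*}
    [AddCommGroup E] [Module ℝ E] [TopologicalSpace E] [IsTopologicalAddGroup E]
    [ContinuousConstSMul ℝ E]
    [AddCommGroup F] [Module ℝ F] [TopologicalSpace F] [IsTopologicalAddGroup F]
    [ContinuousConstSMul ℝ F]
    (T1 : F →L[ℝ] F) (T2 : E →L[ℝ] E) : (E →L[ℝ] F) →ₗ[ℝ] (E →L[ℝ] F) where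
  toFun S := T1.comp S - S.comp T2
  map_add' S1 S2 := by
    ext x
    simp only [ContinuousLinearMap.sub_apply, ContinuousLinearMap.add_apply,
      ContinuousLinearMap.comp_apply, map_add]
    abel
  map_smul' c S := by
    ext x
    simp only [ContinuousLinearMap.sub_apply, ContinuousLinearMap.smul_apply,
      ContinuousLinearMap.comp_apply, map_smul, RingHom.id_apply, smul_sub]

lemma commL_continuous {E F : Type*}
    [AddCommGroup E] [Module ℝ E] [TopologicalSpace E] [IsTopologicalAddGroup E]
    [ContinuousConstSMul ℝ E]
    [AddCommGroup F] [Module ℝ F] [TopologicalSpace F] [IsTopologicalAddGroup F]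
    [ContinuousConstSMul ℝ F]
    (T1 : F →L[ℝ] F) (T2 : E →L[ℝ] E) :
    @Continuous _ _ (simpleTop E F) (simpleTop E F) (commL T1 T2) := by
  letI := simpleTop E F
  have hco : Continuous (fun S : E →L[ℝ] F => (S : E → F)) := continuous_induced_dom
  have hev : ∀ x : E, Continuous fun S : E →L[ℝ] F => S x := fun x =>
    (continuous_apply x).comp hco
  refine continuous_induced_rng.mpr (continuous_pi fun x => ?_)
  exact (T1.continuous.comp (hev x)).sub (hev (T2 x))

/-- If `T ∈ L(E,E)` restricts to `L(F,F)`, then `(T∘Φ_ε − Φ_ε∘T)_ε` is a 0-test object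
for every test object or 0-test object `(Φ_ε)_ε`. -/
theorem commutator_zeroTestObject (A I : Set (ℝ → ℝ)) (hadm : AdmissiblePair A I)
    (j : F →L[ℝ] E) (hj : Function.Injective j)
    (T : E →L[ℝ] E) (Tf : F →L[ℝ] F) (hcompat : ∀ φ : F, j (Tf φ) = T (j φ))
    (Φ : ℝ → (E →L[ℝ] F))
    (hΦ : IsTestObject A I j Φ ∨ IsZeroTestObject A I j Φ) :
    IsZeroTestObject A I j (fun ε => Tf.comp (Φ ε) - (Φ ε).comp T) := by
  -- key algebraic identity on F
  have hkeyF : ∀ ε, (Tf.comp (Φ ε) - (Φ ε).comp T).comp j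
      = commL Tf Tf ((Φ ε).comp j) := by
    intro ε
    ext φ
    simp only [commL, LinearMap.coe_mk, AddHom.coe_mk, ContinuousLinearMap.sub_apply,
      ContinuousLinearMap.comp_apply]
    rw [hcompat]
  have hkeyE : ∀ ε, j.comp (Tf.comp (Φ ε) - (Φ ε).comp T)
      = commL T T (j.comp (Φ ε)) := by
    intro ε
    ext x
    simp only [commL, LinearMap.coe_mk, AddHom.coe_mk, ContinuousLinearMap.sub_apply,
      ContinuousLinearMap.comp_apply, map_sub]
    rw [hcompat]
  refine ⟨?_, ?_, ?_⟩
  · -- first condition: same in both cases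
    have h1 := hΦ.elim (fun h => h.1) (fun h => h.1)
    intro p hp
    set q : Seminorm ℝ (E →L[ℝ] F) := p.comp (commL Tf T) with hq
    have hqc : @Continuous _ _ (simpleTop E F) _ q := by
      letI := simpleTop E F
      exact hp.comp (commL_continuous Tf T)
    obtain ⟨lam, hlamA, hO⟩ := h1 q hqc
    exact ⟨lam, hlamA, hO⟩
  · -- second condition
    intro p hp lam hlam
    set q : Seminorm ℝ (F →L[ℝ] F) := p.comp (commL Tf Tf) with hq
    have hqc : @Continuous _ _ (simpleTop F F) _ q := by
      letI := simpleTop F F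
      exact hp.comp (commL_continuous Tf Tf)
    have hqid : q (ContinuousLinearMap.id ℝ F) = 0 := by
      have : commL Tf Tf (ContinuousLinearMap.id ℝ F) = 0 := by
        ext x
        simp [commL]
      simp [hq, Seminorm.comp_apply, this]
    rcases hΦ with hΦ | hΦ
    · have h := hΦ.2.1 q hqc lam hlam
      refine (Asymptotics.isBigO_of_le eps0 fun ε => ?_).trans h
      have h1 : p ((Tf.comp (Φ ε) - (Φ ε).comp T).comp j)
          = q ((Φ ε).comp j) := by
        rw [hkeyF ε]; rfl
      have h2 : q ((Φ ε).comp j)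
          ≤ q ((Φ ε).comp j - ContinuousLinearMap.id ℝ F) := by
        calc q ((Φ ε).comp j)
            = q (((Φ ε).comp j - ContinuousLinearMap.id ℝ F)
                + ContinuousLinearMap.id ℝ F) := by rw [sub_add_cancel]
          _ ≤ q ((Φ ε).comp j - ContinuousLinearMap.id ℝ F)
                + q (ContinuousLinearMap.id ℝ F) := map_add_le_add q _ _
          _ = q ((Φ ε).comp j - ContinuousLinearMap.id ℝ F) := by rw [hqid, add_zero]
      rw [Real.norm_eq_abs, Real.norm_eq_abs, abs_of_nonneg (apply_nonneg p _),
        abs_of_nonneg (apply_nonneg q _), h1]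
      exact h2
    · have h := hΦ.2.1 q hqc lam hlam
      exact h.congr_left fun ε => by rw [hkeyF ε]; rfl
  · -- third condition
    letI := simpleTop E E
    have hc : Continuous (commL T T) := commL_continuous T T
    rcases hΦ with hΦ | hΦ
    · have h3 := hΦ.2.2
      have : Filter.Tendsto (fun ε => commL T T (j.comp (Φ ε))) eps0
          (nhds (commL T T (ContinuousLinearMap.id ℝ E))) :=
        (hc.tendsto _).comp h3
      have hz : commL T T (ContinuousLinearMap.id ℝ E) = 0 := by
        ext x; simp [commL]
      rw [hz] at this
      simpa only [hkeyE] using this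
    · have h3 := hΦ.2.2
      have : Filter.Tendsto (fun ε => commL T T (j.comp (Φ ε))) eps0
          (nhds (commL T T 0)) := (hc.tendsto _).comp h3
      rw [map_zero] at this
      simpa only [hkeyE] using this

end
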